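/- Fix nonzero real parameters a and c. Suppose A : ℤ×ℕ → ℝ satisfies: A(0,0) = c and A(0,k) = 0 for all k ≥ 1; and for every m ∈ ℤ∖{0}, writing δ = sgn(m): A(m,0) = 0; A(m,k) = 0 for all k > 2|m|; A(m,2|m|) = (3a/2)^{|m|} · c/|m|!; and for all 1 ≤ k ≤ 2|m|−1, A(m,k) = ((k+1)/3)·δ·A(m,k+1) + (3a/k)·A(m−δ, k−2), where the last term is taken to be 0 when k < 2. Then A(m,k) = (−1)^k A(−m,k) for all m ∈ ℤ and all k ∈ ℕ. -/
import Mathlib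


/-- Symmetry of the coefficients of the generalized eigenfunctions in the Jordan
chains of confluent Darboux transformations for the algebraic solutions of
Painlevé III (D7): the coefficient family `A(m,k)` determined by the stated
recursion (with chain normalization `a` and seed normalization `c`) satisfies
`A(m,k) = (-1)^k A(-m,k)`. -/
theorem coefficient_symmetry (a c : ℝ) (ha : a ≠ 0) (hc : c ≠ 0)
    (A : ℤ → ℕ → ℝ)
    (hA00 : A 0 0 = c) (hA0k : ∀ k : ℕ, 1 ≤ k → A 0 k = 0)
    (hAm0 : ∀ m : ℤ, m ≠ 0 → A m 0 = 0)
    (hAtop : ∀ m : ℤ, m ≠ 0 → ∀ k : ℕ, 2 * m.natAbs < k → A m k = 0)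
    (hAlead : ∀ m : ℤ, m ≠ 0 →
      A m (2 * m.natAbs) = (3 * a / 2) ^ m.natAbs * c / Nat.factorial m.natAbs)
    (hArec : ∀ m : ℤ, m ≠ 0 → ∀ k : ℕ, 1 ≤ k → k ≤ 2 * m.natAbs - 1 →
      A m k = (((k : ℝ) + 1) / 3) * (m.sign : ℝ) * A m (k + 1)
        + (if k < 2 then 0 else (3 * a / (k : ℝ)) * A (m - m.sign) (k - 2))) :
    ∀ m : ℤ, ∀ k : ℕ, A m k = (-1) ^ k * A (-m) k := by
  suffices H : ∀ n : ℕ, ∀ m : ℤ, m.natAbs = n → ∀ k, A m k = (-1) ^ k * A (-m) k by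
    intro m k; exact H m.natAbs m rfl k
  intro n
  induction n using Nat.strong_induction_on with
  | _ n ih =>
    intro m hm k
    rcases eq_or_ne m 0 with rfl | hm0
    · simp only [neg_zero]
      rcases Nat.eq_zero_or_pos k with rfl | hk
      · norm_num
      · rw [hA0k k hk]; ring
    · have hn1 : 1 ≤ n := by
        have := Int.natAbs_pos.mpr hm0; omega
      have hnm : (-m).natAbs = n := by rw [Int.natAbs_neg, hm]
      have hm0' : (-m) ≠ 0 := neg_ne_zero.mpr hm0
      have hsign : m.sign = 1 ∧ 1 ≤ m ∨ m.sign = -1 ∧ m ≤ -1 := by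
        rcases lt_or_gt_of_ne hm0 with h | h
        · right; exact ⟨Int.sign_eq_neg_one_of_neg h, by omega⟩
        · left; exact ⟨Int.sign_eq_one_of_pos h, by omega⟩
      have hsub : (m - m.sign).natAbs = n - 1 := by
        rcases hsign with ⟨h1, h2⟩ | ⟨h1, h2⟩ <;> rw [h1] <;> omega
      have hprev : ∀ j, A (m - m.sign) j = (-1) ^ j * A (-(m - m.sign)) j :=
        fun j => ih (n - 1) (by omega) _ hsub j
      have harg : -m - (-m).sign = -(m - m.sign) := by rw [Int.sign_neg]; ring
      have main : ∀ d : ℕ, A m (2 * n - d) = (-1) ^ (2 * n - d) * A (-m) (2 * n - d) := by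
        intro d
        induction d with
        | zero =>
          simp only [Nat.sub_zero]
          have h1 := hAlead m hm0
          have h2 := hAlead (-m) hm0'
          rw [hm] at h1
          rw [hnm] at h2
          rw [h1, h2]
          have : ((-1 : ℝ)) ^ (2 * n) = 1 := by
            rw [pow_mul]; norm_num
          rw [this, one_mul]
        | succ d hd =>
          by_cases hk0 : 2 * n ≤ d + 1
          · have h0 : 2 * n - (d + 1) = 0 := by omega
            rw [h0, hAm0 m hm0, hAm0 (-m) hm0']; ring
          · have hk1 : 1 ≤ 2 * n - (d + 1) := by omega
            set k := 2 * n - (d + 1) with hkdef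
            have hk2 : k ≤ 2 * n - 1 := by omega
            have hk1' : k + 1 = 2 * n - d := by omega
            have hd' : A m (k + 1) = (-1) ^ (k + 1) * A (-m) (k + 1) := by
              rw [hk1']; exact hd
            have e1 := hArec m hm0 k hk1 (by rw [hm]; exact hk2)
            have e2 := hArec (-m) hm0' k hk1 (by rw [hnm]; exact hk2)
            rw [Int.sign_neg, show -m - -m.sign = -(m - m.sign) from by ring] at e2
            by_cases hklt : k < 2
            · rw [if_pos hklt] at e1 e2
              rw [e1, e2, hd', pow_succ]
              push_cast
              ring
            · rw [if_neg hklt] at e1 e2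
              have hpow : ((-1 : ℝ)) ^ k = (-1) ^ (k - 2) := by
                obtain ⟨j, hj⟩ : ∃ j, k = j + 2 := ⟨k - 2, by omega⟩
                rw [hj, Nat.add_sub_cancel, pow_succ, pow_succ]; ring
              rw [e1, e2, hd', hprev (k - 2), ← hpow, pow_succ]
              push_cast
              ring
      by_cases hk : 2 * n < k
      · rw [hAtop m hm0 k (by rw [hm]; exact hk), hAtop (-m) hm0' k (by rw [hnm]; exact hk)]
        ring
      · have hkk : k = 2 * n - (2 * n - k) := by omega
        rw [hkk]; exact main _
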